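/- Let A ∈ ℝ and let z₁,…,z₅ : ℝ → ℝ be differentiable functions satisfying the system (8): z₁' = 2z₄, z₂' = z₃, z₃' = −z₁ − 16A z₂ − 16 z₂², z₄' = −A z₁ + (1/3) z₅ − (8/3) z₁ z₂, z₅' = −6A z₄ + 2 z₁ z₃ − 8 z₂ z₄. Then F₃ = z₁ z₅ − 3 z₄² − 2 z₁² z₂ is a constant of motion: d/dt F₃(z(t)) = 0. -/

import Mathlib

/-- F₃ is a constant of motion of the five-dimensional system (8). -/
theorem F3_constant_of_motion (A : ℝ) (z₁ z₂ z₃ z₄ z₅ : ℝ → ℝ)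
    (hz₁ : Differentiable ℝ z₁) (hz₂ : Differentiable ℝ z₂)
    (hz₃ : Differentiable ℝ z₃) (hz₄ : Differentiable ℝ z₄)
    (hz₅ : Differentiable ℝ z₅)
    (h₁ : ∀ t, deriv z₁ t = 2 * z₄ t)
    (h₂ : ∀ t, deriv z₂ t = z₃ t)
    (h₃ : ∀ t, deriv z₃ t = -z₁ t - 16 * A * z₂ t - 16 * (z₂ t)^2)
    (h₄ : ∀ t, deriv z₄ t = -A * z₁ t + (1/3) * z₅ t - (8/3) * z₁ t * z₂ t)
    (h₅ : ∀ t, deriv z₅ t = -(6 * A) * z₄ t + 2 * z₁ t * z₃ t - 8 * z₂ t * z₄ t) :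
    ∀ t, deriv (fun s =>
      z₁ s * z₅ s - 3 * (z₄ s)^2 - 2 * (z₁ s)^2 * z₂ s) t = 0 := by
  intro t
  have d₁ : HasDerivAt z₁ (2 * z₄ t) t := h₁ t ▸ (hz₁ t).hasDerivAt
  have d₂ : HasDerivAt z₂ (z₃ t) t := h₂ t ▸ (hz₂ t).hasDerivAt
  have d₃ : HasDerivAt z₃ (-z₁ t - 16 * A * z₂ t - 16 * (z₂ t)^2) t :=
    h₃ t ▸ (hz₃ t).hasDerivAt
  have d₄ : HasDerivAt z₄ (-A * z₁ t + (1/3) * z₅ t - (8/3) * z₁ t * z₂ t) t :=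
    h₄ t ▸ (hz₄ t).hasDerivAt
  have d₅ : HasDerivAt z₅ (-(6 * A) * z₄ t + 2 * z₁ t * z₃ t - 8 * z₂ t * z₄ t) t :=
    h₅ t ▸ (hz₅ t).hasDerivAt
  have dF : HasDerivAt (fun s => z₁ s * z₅ s - 3 * (z₄ s)^2 - 2 * (z₁ s)^2 * z₂ s)
      ((2 * z₄ t) * z₅ t + z₁ t * (-(6 * A) * z₄ t + 2 * z₁ t * z₃ t - 8 * z₂ t * z₄ t)
        - 3 * (2 * z₄ t * (-A * z₁ t + (1/3) * z₅ t - (8/3) * z₁ t * z₂ t))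
        - (2 * (2 * z₁ t * (2 * z₄ t)) * z₂ t + 2 * (z₁ t)^2 * z₃ t)) t := by
    have := ((d₁.mul d₅).sub ((d₄.pow 2).const_mul 3)).sub
      (((d₁.pow 2).const_mul 2).mul d₂)
    refine this.congr_deriv ?_
    simp only [Pi.pow_apply]
    ring
  rw [dF.deriv]
  ring
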